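/- For every integer k ≥ 0 and every odd integer n ≥ 1: I_{n,k} > 0 if n ≡ 1 (mod 4), and I_{n,k} < 0 if n ≡ 3 (mod 4). -/

import Mathlib

open Real MeasureTheory

section helpers
open intervalIntegral Set


lemma hd_cos (n : ℕ) (hn : 1 ≤ n) (t : ℝ) :
    HasDerivAt (fun t : ℝ => -Real.cos ((n:ℝ) * t) / n) (Real.sin ((n:ℝ)*t)) t := by
  have h1 : HasDerivAt (fun t : ℝ => (n:ℝ) * t) n t := by simpa using (hasDerivAt_id t).const_mul (n:ℝ)
  have h2 := ((Real.hasDerivAt_cos ((n:ℝ)*t)).comp t h1).neg.div_const (n:ℝ)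
  have hn0 : (n:ℝ) ≠ 0 := by positivity
  exact h2.congr_deriv (by field_simp)

lemma hd_sin (n : ℕ) (hn : 1 ≤ n) (t : ℝ) :
    HasDerivAt (fun t : ℝ => Real.sin ((n:ℝ) * t) / n) (Real.cos ((n:ℝ)*t)) t := by
  have h1 : HasDerivAt (fun t : ℝ => (n:ℝ) * t) n t := by simpa using (hasDerivAt_id t).const_mul (n:ℝ)
  have h2 := ((Real.hasDerivAt_sin ((n:ℝ)*t)).comp t h1).div_const (n:ℝ)
  have hn0 : (n:ℝ) ≠ 0 := by positivity
  exact h2.congr_deriv (by field_simp)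

lemma cos_odd (n : ℕ) (hno : Odd n) : Real.cos ((n:ℝ) * (π/2)) = 0 := by
  obtain ⟨m, rfl⟩ := hno
  have : ((2*m+1 : ℕ) : ℝ) * (π/2) = m * π + π/2 := by push_cast; ring
  rw [this, Real.cos_add, Real.cos_pi_div_two, Real.sin_pi_div_two, Real.sin_nat_mul_pi]
  ring

end helpers

/-- `I_{n,k} = ∫₀^{π/2} t^{2k+1} sin(nt) dt`. -/
noncomputable def I (n k : ℕ) : ℝ :=
  ∫ t in (0:ℝ)..(π / 2), t ^ (2 * k + 1) * Real.sin ((n : ℝ) * t)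

section helpers2
open intervalIntegral Set

lemma parts1 (n k : ℕ) (hn : 1 ≤ n) (hno : Odd n) :
    I n k = ((2*k+1:ℝ)/n) * ∫ t in (0:ℝ)..(π/2), t^(2*k) * Real.cos ((n:ℝ)*t) := by
  have hu : ∀ x ∈ Set.uIcc (0:ℝ) (π/2),
      HasDerivAt (fun t : ℝ => t ^ (2*k+1)) (((2*k+1:ℕ):ℝ) * x ^ (2*k)) x := by
    intro x _
    simpa using hasDerivAt_pow (2*k+1) x
  have hv : ∀ x ∈ Set.uIcc (0:ℝ) (π/2),
      HasDerivAt (fun t : ℝ => -Real.cos ((n:ℝ) * t) / n) (Real.sin ((n:ℝ)*x)) x :=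
    fun x _ => hd_cos n hn x
  have hu' : IntervalIntegrable (fun x : ℝ => ((2*k+1:ℕ):ℝ) * x ^ (2*k)) volume 0 (π/2) :=
    (Continuous.intervalIntegrable (by fun_prop) _ _)
  have hv' : IntervalIntegrable (fun x : ℝ => Real.sin ((n:ℝ)*x)) volume 0 (π/2) :=
    (Continuous.intervalIntegrable (by fun_prop) _ _)
  have h := integral_mul_deriv_eq_deriv_mul hu hv hu' hv'
  have hn0 : (n:ℝ) ≠ 0 := by positivity
  rw [I, h, cos_odd n hno]
  have : ∫ x in (0:ℝ)..(π/2), ((2*k+1:ℕ):ℝ) * x ^ (2*k) * (-Real.cos ((n:ℝ)*x) / n)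
      = (-(2*k+1:ℝ)/n) * ∫ x in (0:ℝ)..(π/2), x^(2*k) * Real.cos ((n:ℝ)*x) := by
    rw [← intervalIntegral.integral_const_mul]
    congr 1; ext x; push_cast; field_simp
  rw [this]
  simp
  ring

lemma parts2 (n j : ℕ) (hn : 1 ≤ n) :
    (∫ t in (0:ℝ)..(π/2), t^(2*(j+1)) * Real.cos ((n:ℝ)*t))
      = (π/2)^(2*(j+1)) * Real.sin ((n:ℝ)*(π/2)) / n
        - ((2*j+2:ℝ)/n) * ∫ t in (0:ℝ)..(π/2), t^(2*j+1) * Real.sin ((n:ℝ)*t) := by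
  have hu : ∀ x ∈ Set.uIcc (0:ℝ) (π/2),
      HasDerivAt (fun t : ℝ => t ^ (2*(j+1))) (((2*(j+1):ℕ):ℝ) * x ^ (2*j+1)) x := by
    intro x _
    have := hasDerivAt_pow (2*(j+1)) x
    have h2 : 2*(j+1) - 1 = 2*j+1 := by omega
    rwa [h2] at this
  have hv : ∀ x ∈ Set.uIcc (0:ℝ) (π/2),
      HasDerivAt (fun t : ℝ => Real.sin ((n:ℝ) * t) / n) (Real.cos ((n:ℝ)*x)) x :=
    fun x _ => hd_sin n hn x
  have hu' : IntervalIntegrable (fun x : ℝ => ((2*(j+1):ℕ):ℝ) * x ^ (2*j+1)) volume 0 (π/2) :=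
    (Continuous.intervalIntegrable (by fun_prop) _ _)
  have hv' : IntervalIntegrable (fun x : ℝ => Real.cos ((n:ℝ)*x)) volume 0 (π/2) :=
    (Continuous.intervalIntegrable (by fun_prop) _ _)
  have h := integral_mul_deriv_eq_deriv_mul hu hv hu' hv'
  have hn0 : (n:ℝ) ≠ 0 := by positivity
  rw [h]
  have : ∫ x in (0:ℝ)..(π/2), ((2*(j+1):ℕ):ℝ) * x ^ (2*j+1) * (Real.sin ((n:ℝ)*x) / n)
      = ((2*j+2:ℝ)/n) * ∫ x in (0:ℝ)..(π/2), x^(2*j+1) * Real.sin ((n:ℝ)*x) := by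
    rw [← intervalIntegral.integral_const_mul]
    congr 1; ext x; push_cast; field_simp
  rw [this]
  simp
  ring

lemma sqrt2_half_lt_one : Real.sqrt 2 / 2 < 1 := by
  nlinarith [Real.sq_sqrt (by norm_num : (0:ℝ) ≤ 2), Real.sqrt_nonneg 2]

lemma witness_mem (n : ℕ) (hn : 1 ≤ n) : π/(4*n) ∈ Set.Icc (0:ℝ) (π/2) := by
  have hπ := Real.pi_pos
  have hn1 : (1:ℝ) ≤ n := by exact_mod_cast hn
  constructor
  · positivity
  · rw [div_le_div_iff₀ (by positivity) (by norm_num)]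
    nlinarith

lemma witness_sin (n : ℕ) (hn : 1 ≤ n) :
    Real.sin ((n:ℝ) * (π/(4*n))) = Real.sqrt 2 / 2 := by
  have hn0 : (n:ℝ) ≠ 0 := by positivity
  have : (n:ℝ) * (π/(4*n)) = π/4 := by field_simp
  rw [this, Real.sin_pi_div_four]

lemma R_lt (n m : ℕ) (hn : 1 ≤ n) (hm : 1 ≤ m) :
    ∫ t in (0:ℝ)..(π/2), t^m * Real.sin ((n:ℝ)*t) < ∫ t in (0:ℝ)..(π/2), t^m := by
  have hπ := Real.pi_pos
  apply integral_lt_integral_of_continuousOn_of_le_of_exists_lt (by positivity)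
    (Continuous.continuousOn (by fun_prop)) (Continuous.continuousOn (by fun_prop))
  · intro x hx
    have hx0 : (0:ℝ) ≤ x := le_of_lt hx.1
    calc x^m * Real.sin ((n:ℝ)*x) ≤ x^m * 1 := by
          exact mul_le_mul_of_nonneg_left (Real.sin_le_one _) (by positivity)
      _ = x^m := by ring
  · refine ⟨π/(4*n), witness_mem n hn, ?_⟩
    rw [witness_sin n hn]
    have hc : (0:ℝ) < (π/(4*n))^m := by positivity
    nlinarith [sqrt2_half_lt_one]

lemma R_gt (n m : ℕ) (hn : 1 ≤ n) (hm : 1 ≤ m) :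
    -∫ t in (0:ℝ)..(π/2), t^m < ∫ t in (0:ℝ)..(π/2), t^m * Real.sin ((n:ℝ)*t) := by
  have hπ := Real.pi_pos
  have h : ∫ t in (0:ℝ)..(π/2), -(t^m) < ∫ t in (0:ℝ)..(π/2), t^m * Real.sin ((n:ℝ)*t) := by
    apply integral_lt_integral_of_continuousOn_of_le_of_exists_lt (by positivity)
      (Continuous.continuousOn (by fun_prop)) (Continuous.continuousOn (by fun_prop))
    · intro x hx
      have hx0 : (0:ℝ) ≤ x := le_of_lt hx.1
      have := Real.neg_one_le_sin ((n:ℝ)*x)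
      nlinarith [pow_nonneg hx0 m]
    · refine ⟨π/(4*n), witness_mem n hn, ?_⟩
      rw [witness_sin n hn]
      have hc : (0:ℝ) < (π/(4*n))^m := by positivity
      nlinarith [Real.sqrt_nonneg 2]
  rwa [intervalIntegral.integral_neg] at h

lemma sin_mod1 (n : ℕ) (h : n % 4 = 1) : Real.sin ((n:ℝ)*(π/2)) = 1 := by
  obtain ⟨j, hj⟩ : ∃ j, n = 4*j + 1 := ⟨n/4, by omega⟩
  subst hj
  have : ((4*j+1 : ℕ):ℝ) * (π/2) = π/2 + j * (2*π) := by push_cast; ring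
  rw [this, Real.sin_add_nat_mul_two_pi, Real.sin_pi_div_two]

lemma sin_mod3 (n : ℕ) (h : n % 4 = 3) : Real.sin ((n:ℝ)*(π/2)) = -1 := by
  obtain ⟨j, hj⟩ : ∃ j, n = 4*j + 3 := ⟨n/4, by omega⟩
  subst hj
  have : ((4*j+3 : ℕ):ℝ) * (π/2) = (π + π/2) + j * (2*π) := by push_cast; ring
  rw [this, Real.sin_add_nat_mul_two_pi, Real.sin_add, Real.sin_pi, Real.cos_pi,
    Real.sin_pi_div_two]
  ring

lemma C_sign (n j : ℕ) (hn : 1 ≤ n) :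
    (Real.sin ((n:ℝ)*(π/2)) = 1 →
      0 < ∫ t in (0:ℝ)..(π/2), t^(2*(j+1)) * Real.cos ((n:ℝ)*t)) ∧
    (Real.sin ((n:ℝ)*(π/2)) = -1 →
      (∫ t in (0:ℝ)..(π/2), t^(2*(j+1)) * Real.cos ((n:ℝ)*t)) < 0) := by
  have hπ := Real.pi_pos
  have hnpos : (0:ℝ) < n := by exact_mod_cast hn
  set R := ∫ t in (0:ℝ)..(π/2), t^(2*j+1) * Real.sin ((n:ℝ)*t) with hR
  set P := (π/2)^(2*j+2) with hP
  have hB : (∫ t in (0:ℝ)..(π/2), t^(2*j+1)) = P / (2*j+2 : ℝ) := by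
    rw [integral_pow]
    rw [show 2*j+1+1 = 2*j+2 from by ring]
    push_cast
    rw [hP]
    ring_nf
  have hd : (0:ℝ) < (2*j+2 : ℝ) := by positivity
  have hRlt : R * (2*j+2 : ℝ) < P := by
    have := R_lt n (2*j+1) hn (by omega)
    rw [hB] at this
    exact (lt_div_iff₀ hd).mp this
  have hRgt : -P < R * (2*j+2 : ℝ) := by
    have := R_gt n (2*j+1) hn (by omega)
    rw [hB, ← neg_div] at this
    exact (div_lt_iff₀ hd).mp this
  have hexp : (π/2 : ℝ)^(2*(j+1)) = P := by rw [hP]; ring_nf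
  constructor
  · intro hS
    rw [parts2 n j hn, hS, hexp]
    rw [show P * 1 / (n:ℝ) - ((2*j+2:ℝ)/n) * R = (P - R * (2*j+2)) / n by ring]
    exact div_pos (by linarith) hnpos
  · intro hS
    rw [parts2 n j hn, hS, hexp]
    rw [show P * (-1) / (n:ℝ) - ((2*j+2:ℝ)/n) * R = (-P - R * (2*j+2)) / n by ring]
    exact div_neg_of_neg_of_pos (by linarith) hnpos

lemma C0 (n : ℕ) (hn : 1 ≤ n) :
    (∫ t in (0:ℝ)..(π/2), t^(2*0) * Real.cos ((n:ℝ)*t)) = Real.sin ((n:ℝ)*(π/2)) / n := by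
  have h := integral_eq_sub_of_hasDerivAt (fun x _ => hd_sin n hn x)
    ((Continuous.intervalIntegrable (by fun_prop) (0:ℝ) (π/2)) :
      IntervalIntegrable (fun x : ℝ => Real.cos ((n:ℝ)*x)) volume 0 (π/2))
  simp only [Nat.mul_zero, pow_zero, one_mul]
  rw [h]
  simp


end helpers2

/-- For every `k ≥ 0` and odd `n ≥ 1`: `I_{n,k} > 0` if `n ≡ 1 (mod 4)`
and `I_{n,k} < 0` if `n ≡ 3 (mod 4)`. -/
theorem I_sign (n k : ℕ) (hn : 1 ≤ n) (hno : Odd n) :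
    (n % 4 = 1 → 0 < I n k) ∧ (n % 4 = 3 → I n k < 0) := by
  have hnpos : (0:ℝ) < n := by exact_mod_cast hn
  have hcoef : (0:ℝ) < (2*k+1:ℝ)/n := by positivity
  have hI := parts1 n k hn hno
  rcases k with _ | j
  · rw [hI, C0 n hn]
    constructor
    · intro h
      rw [sin_mod1 n h]
      positivity
    · intro h
      rw [sin_mod3 n h]
      rw [show (-1:ℝ)/n = -(1/n) by ring]
      refine mul_neg_of_pos_of_neg hcoef ?_
      have : (0:ℝ) < 1/n := by positivity
      linarith
  · obtain ⟨hC1, hC2⟩ := C_sign n j hn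
    constructor
    · intro h
      rw [hI]
      exact mul_pos hcoef (hC1 (sin_mod1 n h))
    · intro h
      rw [hI]
      exact mul_neg_of_pos_of_neg hcoef (hC2 (sin_mod3 n h))
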